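/- Let f be L-smooth and g proper lsc with argmin(f+g) ≠ ∅, and γ < 1/L. Then f + g has bounded sublevel sets if and only if the Douglas–Rachford envelope φ_γ^{DR} has bounded sublevel sets. -/

import Mathlib

open Set Filter Bornology


variable {n : ℕ}
local notation "X" => EuclideanSpace ℝ (Fin n)

lemma inner_gradient_eq (f : X → ℝ) (x v : X) :
    (inner ℝ (gradient f x) v : ℝ) = fderiv ℝ f x v := by
  rw [gradient, ← InnerProductSpace.toDual_apply_apply, LinearIsometryEquiv.apply_symm_apply]

lemma hasDerivAt_comp_line (f : X → ℝ) (hC1 : ContDiff ℝ 1 f) (x v : X) (t : ℝ) :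
    HasDerivAt (fun t : ℝ => f (x + t • v)) (inner ℝ (gradient f (x + t • v)) v : ℝ) t := by
  have h1 : HasDerivAt (fun t : ℝ => x + t • v) v t := by
    simpa using ((hasDerivAt_id t).smul_const v).const_add x
  have h2 := ((hC1.differentiable one_ne_zero) (x + t • v)).hasFDerivAt
  rw [inner_gradient_eq]
  exact h2.comp_hasDerivAt t h1

lemma descent_aux (f : X → ℝ) (L : ℝ) (hL0 : 0 ≤ L) (hC1 : ContDiff ℝ 1 f)
    (hLip : ∀ x y, ‖gradient f x - gradient f y‖ ≤ L * ‖x - y‖)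
    (x v : X) (σ : ℝ) (hσ : |σ| ≤ 1) :
    σ * (f (x + v) - f x - inner ℝ (gradient f x) v) ≤ L / 2 * ‖v‖ ^ 2 := by
  set χ : ℝ → ℝ := fun t => σ * (f (x + t • v) - f x - t * (inner ℝ (gradient f x) v : ℝ))
      - L / 2 * t ^ 2 * ‖v‖ ^ 2 with hχ
  have hd : ∀ t : ℝ, HasDerivAt χ
      (σ * ((inner ℝ (gradient f (x + t • v)) v : ℝ) - (inner ℝ (gradient f x) v : ℝ))
        - L * t * ‖v‖ ^ 2) t := by
    intro t
    have h1 := hasDerivAt_comp_line f hC1 x v t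
    have h2 : HasDerivAt (fun t : ℝ => f x + t * (inner ℝ (gradient f x) v : ℝ))
        (inner ℝ (gradient f x) v : ℝ) t := by
      simpa using ((hasDerivAt_id t).mul_const (inner ℝ (gradient f x) v : ℝ)).const_add (f x)
    have h3 : HasDerivAt (fun t : ℝ => L / 2 * t ^ 2 * ‖v‖ ^ 2)
        (L * t * ‖v‖ ^ 2) t := by
      have := ((hasDerivAt_pow 2 t).const_mul (L / 2)).mul_const (‖v‖ ^ 2)
      exact this.congr_deriv (by rw [show (2:ℕ) - 1 = 1 from rfl]; push_cast; ring)
    have := ((h1.sub h2).const_mul σ).sub h3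
    convert this using 2
    · rfl
    · rfl
    · funext y
      simp only [hχ, Pi.sub_apply]
      ring
  have hanti : AntitoneOn χ (Icc (0:ℝ) 1) := by
    apply antitoneOn_of_deriv_nonpos (convex_Icc 0 1)
    · exact fun t _ => (hd t).continuousAt.continuousWithinAt
    · exact fun t _ => ((hd t).differentiableAt).differentiableWithinAt
    · intro t ht
      rw [interior_Icc] at ht
      rw [(hd t).deriv]
      have hinner : (inner ℝ (gradient f (x + t • v)) v : ℝ) - (inner ℝ (gradient f x) v : ℝ)
          = (inner ℝ (gradient f (x + t • v) - gradient f x) v : ℝ) := by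
        rw [inner_sub_left]
      have hcs : |(inner ℝ (gradient f (x + t • v) - gradient f x) v : ℝ)|
          ≤ L * t * ‖v‖ ^ 2 := by
        refine (abs_real_inner_le_norm _ _).trans ?_
        have := hLip (x + t • v) x
        have heq : ‖x + t • v - x‖ = t * ‖v‖ := by
          simp [norm_smul, abs_of_pos ht.1]
        rw [heq] at this
        calc ‖gradient f (x + t • v) - gradient f x‖ * ‖v‖
            ≤ L * (t * ‖v‖) * ‖v‖ :=
              mul_le_mul_of_nonneg_right this (norm_nonneg v)
          _ = L * t * ‖v‖ ^ 2 := by ring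
      have : σ * ((inner ℝ (gradient f (x + t • v)) v : ℝ) - (inner ℝ (gradient f x) v : ℝ))
          ≤ L * t * ‖v‖ ^ 2 := by
        rw [hinner]
        calc σ * _ ≤ |σ * (inner ℝ (gradient f (x + t • v) - gradient f x) v : ℝ)| := le_abs_self _
          _ = |σ| * |(inner ℝ (gradient f (x + t • v) - gradient f x) v : ℝ)| := abs_mul _ _
          _ ≤ 1 * (L * t * ‖v‖ ^ 2) := by
              apply mul_le_mul hσ hcs (abs_nonneg _) zero_le_one
          _ = L * t * ‖v‖ ^ 2 := one_mul _
      linarith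
  have h01 := hanti (Set.left_mem_Icc.mpr zero_le_one) (Set.right_mem_Icc.mpr zero_le_one)
      zero_le_one
  have hχ0 : χ 0 = 0 := by simp [hχ]
  have hχ1 : χ 1 = σ * (f (x + v) - f x - inner ℝ (gradient f x) v) - L / 2 * ‖v‖ ^ 2 := by
    simp [hχ]
  rw [hχ0, hχ1] at h01
  linarith

lemma descent (f : X → ℝ) (L : ℝ) (hL0 : 0 ≤ L) (hC1 : ContDiff ℝ 1 f)
    (hLip : ∀ x y, ‖gradient f x - gradient f y‖ ≤ L * ‖x - y‖) (x y : X) :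
    |f y - f x - inner ℝ (gradient f x) (y - x)| ≤ L / 2 * ‖y - x‖ ^ 2 := by
  have h1 := descent_aux f L hL0 hC1 hLip x (y - x) 1 (by norm_num)
  have h2 := descent_aux f L hL0 hC1 hLip x (y - x) (-1) (by norm_num)
  rw [add_sub_cancel] at h1 h2
  rw [abs_le]
  constructor <;> nlinarith

lemma strong_min (f : X → ℝ) (L γ : ℝ) (hL : 0 < L) (hγ0 : 0 < γ)
    (hC1 : ContDiff ℝ 1 f)
    (hLip : ∀ x y, ‖gradient f x - gradient f y‖ ≤ L * ‖x - y‖)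
    (x w : X) :
    f x + 1 / (2 * γ) * ‖x - (x + γ • gradient f x)‖ ^ 2
      + (1 / (2 * γ) - L / 2) * ‖w - x‖ ^ 2
    ≤ f w + 1 / (2 * γ) * ‖w - (x + γ • gradient f x)‖ ^ 2 := by
  set s := x + γ • gradient f x with hs
  have hdes := (abs_le.mp (descent f L hL.le hC1 hLip x w)).1
  have hexp : ‖w - s‖ ^ 2 = ‖w - x‖ ^ 2 - 2 * γ * (inner ℝ (gradient f x) (w - x) : ℝ)
      + γ ^ 2 * ‖gradient f x‖ ^ 2 := by
    have h0 : w - s = (w - x) - γ • gradient f x := by rw [hs]; abel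
    rw [h0, norm_sub_sq_real, real_inner_smul_right, norm_smul, real_inner_comm]
    simp [abs_of_pos hγ0, mul_pow]
    ring
  have hxs : ‖x - s‖ ^ 2 = γ ^ 2 * ‖gradient f x‖ ^ 2 := by
    have h0 : x - s = -(γ • gradient f x) := by rw [hs]; abel
    rw [h0, norm_neg, norm_smul]
    simp [abs_of_pos hγ0, mul_pow]
  rw [hexp, hxs]
  have hinv : 1 / (2 * γ) * (2 * γ) = 1 := by field_simp
  nlinarith [hdes, hinv]

lemma prox_foc (f : X → ℝ) (L γ : ℝ) (hL : 0 < L) (hγ0 : 0 < γ)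
    (hC1 : ContDiff ℝ 1 f)
    (hLip : ∀ x y, ‖gradient f x - gradient f y‖ ≤ L * ‖x - y‖)
    (pf : X → X)
    (hpf : ∀ s, IsMinOn (fun w => f w + 1 / (2 * γ) * ‖w - s‖ ^ 2) Set.univ (pf s))
    (s : X) : pf s + γ • gradient f (pf s) = s := by
  set x := pf s with hx
  set u : X := gradient f x + γ⁻¹ • (x - s) with hu
  have hKpos : (0:ℝ) < L / 2 + γ⁻¹ / 2 := by positivity
  have key : ∀ t : ℝ, 0 < t → t ≤ 1 → ‖u‖ ^ 2 ≤ t * (L / 2 + γ⁻¹ / 2) * ‖u‖ ^ 2 := by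
    intro t ht0 ht1
    set w : X := x - t • u with hw
    have hmin := isMinOn_iff.mp (hpf s) w (Set.mem_univ w)
    have hdes := (abs_le.mp (descent f L hL.le hC1 hLip x w)).2
    have hwx : w - x = -(t • u) := by rw [hw]; abel
    have hnwx : ‖w - x‖ ^ 2 = t ^ 2 * ‖u‖ ^ 2 := by
      rw [hwx, norm_neg, norm_smul]
      simp [abs_of_pos ht0, mul_pow]
    have hiwx : (inner ℝ (gradient f x) (w - x) : ℝ) = -(t * (inner ℝ (gradient f x) u : ℝ)) := by
      rw [hwx, inner_neg_right, real_inner_smul_right]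
    have hws : ‖w - s‖ ^ 2 = ‖x - s‖ ^ 2 - 2 * t * (inner ℝ (x - s) u : ℝ)
        + t ^ 2 * ‖u‖ ^ 2 := by
      have h0 : w - s = (x - s) - t • u := by rw [hw]; abel
      rw [h0, norm_sub_sq_real, real_inner_smul_right, norm_smul]
      simp [abs_of_pos ht0, mul_pow]
      ring
    have hiu : (inner ℝ (gradient f x) u : ℝ) + γ⁻¹ * (inner ℝ (x - s) u : ℝ) = ‖u‖ ^ 2 := by
      rw [← real_inner_smul_left, ← inner_add_left, ← hu, real_inner_self_eq_norm_sq]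
    have hiu2 : t * (inner ℝ (gradient f x) u : ℝ) + t * γ⁻¹ * (inner ℝ (x - s) u : ℝ)
        = t * ‖u‖ ^ 2 := by linear_combination t * hiu
    rw [hnwx, hiwx] at hdes
    rw [hws] at hmin
    have hc : 1 / (2 * γ) = γ⁻¹ / 2 := by rw [one_div, mul_inv_rev, div_eq_mul_inv]
    rw [hc] at hmin
    rw [← hx] at hmin
    have h1 : t * ‖u‖ ^ 2 ≤ t * (t * (L / 2 + γ⁻¹ / 2) * ‖u‖ ^ 2) := by nlinarith [hmin, hdes, hiu2]
    exact (mul_le_mul_iff_right₀ ht0).mp h1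
  have hu0 : u = 0 := by
    by_contra hne
    have hA : (0:ℝ) < ‖u‖ ^ 2 := pow_pos (norm_pos_iff.mpr hne) 2
    set K := L / 2 + γ⁻¹ / 2 with hK
    set t := min 1 (1 / (2 * K)) with htdef
    have ht0 : 0 < t := lt_min one_pos (one_div_pos.mpr (by linarith))
    have ht1 : t ≤ 1 := min_le_left _ _
    have h := key t ht0 ht1
    have htK : t * K ≤ 1 / 2 := by
      have h2 : t ≤ 1 / (2 * K) := min_le_right _ _
      calc t * K ≤ 1 / (2 * K) * K := mul_le_mul_of_nonneg_right h2 hKpos.le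
        _ = 1 / 2 := by field_simp
    have hfin : ‖u‖ ^ 2 ≤ 1 / 2 * ‖u‖ ^ 2 := h.trans (mul_le_mul_of_nonneg_right htK hA.le)
    linarith
  have h2 : γ • u = γ • gradient f x + (x - s) := by
    rw [hu, smul_add, smul_smul]
    rw [mul_inv_cancel₀ (ne_of_gt hγ0), one_smul]
  rw [hu0, smul_zero] at h2
  have h3 : x + γ • gradient f x - s = 0 := by
    rw [show x + γ • gradient f x - s = γ • gradient f x + (x - s) from by abel, ← h2]
  exact sub_eq_zero.mp h3

lemma prox_fix (f : X → ℝ) (L γ : ℝ) (hL : 0 < L) (hγ0 : 0 < γ)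
    (hc2 : 0 < 1 / (2 * γ) - L / 2)
    (hC1 : ContDiff ℝ 1 f)
    (hLip : ∀ x y, ‖gradient f x - gradient f y‖ ≤ L * ‖x - y‖)
    (pf : X → X)
    (hpf : ∀ s, IsMinOn (fun w => f w + 1 / (2 * γ) * ‖w - s‖ ^ 2) Set.univ (pf s))
    (x : X) : pf (x + γ • gradient f x) = x := by
  set s := x + γ • gradient f x with hs
  have h1 := strong_min f L γ hL hγ0 hC1 hLip x (pf s)
  rw [← hs] at h1
  have h2 := isMinOn_iff.mp (hpf s) x (Set.mem_univ x)
  have h3 : (1 / (2 * γ) - L / 2) * ‖pf s - x‖ ^ 2 ≤ 0 := by linarith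
  have h4 : ‖pf s - x‖ ^ 2 ≤ 0 := by nlinarith [sq_nonneg ‖pf s - x‖]
  have h5 : ‖pf s - x‖ ^ 2 = 0 := le_antisymm h4 (sq_nonneg _)
  have h6 : ‖pf s - x‖ = 0 := by
    have := sq_eq_zero_iff.mp h5
    exact this
  exact sub_eq_zero.mp (norm_eq_zero.mp h6)

set_option maxHeartbeats 1000000 in
/-- For `f` `L`-smooth and `g` proper lsc with `argmin(f+g) ≠ ∅` and `γ < 1/L`,
`f + g` has bounded sublevel sets iff the Douglas–Rachford envelope `φ_γ^{DR}` has bounded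
sublevel sets. -/
theorem DRE_level_boundedness_equiv {n : ℕ} (f : EuclideanSpace ℝ (Fin n) → ℝ)
    (g : EuclideanSpace ℝ (Fin n) → EReal) (L γ : ℝ) (hL : 0 < L)
    (hC1 : ContDiff ℝ 1 f)
    (hLip : ∀ x y, ‖gradient f x - gradient f y‖ ≤ L * ‖x - y‖)
    (hgproper : ∃ x, g x ≠ ⊤) (hgbot : ∀ x, g x ≠ ⊥) (hglsc : LowerSemicontinuous g)
    (hγ0 : 0 < γ) (hγ : γ < 1 / L)
    (hargmin : {x | IsMinOn (fun x => ((f x : ℝ) : EReal) + g x) Set.univ x}.Nonempty)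
    (pf : EuclideanSpace ℝ (Fin n) → EuclideanSpace ℝ (Fin n))
    (hpf : ∀ s, IsMinOn (fun w => f w + 1 / (2 * γ) * ‖w - s‖ ^ 2) Set.univ (pf s)) :
    (∀ α : ℝ, IsBounded {x | ((f x : ℝ) : EReal) + g x ≤ (α : EReal)}) ↔
    (∀ α : ℝ, IsBounded {s | (⨅ w, (g w + ((f (pf s)
      + (inner ℝ (gradient f (pf s)) (w - pf s) : ℝ)
      + 1 / (2 * γ) * ‖w - pf s‖ ^ 2 : ℝ) : EReal))) ≤ (α : EReal)}) := by
  have hγL : γ * L < 1 := (lt_div_iff₀ hL).mp hγ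
  have hc2 : 0 < 1 / (2 * γ) - L / 2 := by
    rw [sub_pos, div_lt_div_iff₀ (by norm_num) (by positivity)]
    nlinarith
  obtain ⟨x₀, hx₀⟩ := hargmin
  obtain ⟨xp, hxp⟩ := hgproper
  have hx₀m : IsMinOn (fun x => ((f x : ℝ) : EReal) + g x) Set.univ x₀ := hx₀
  have hx₀' := isMinOn_iff.mp hx₀m
  have hgx₀top : g x₀ ≠ ⊤ := by
    intro htop
    have h1 := hx₀' xp (Set.mem_univ xp)
    rw [htop, EReal.add_top_of_ne_bot (EReal.coe_ne_bot _)] at h1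
    exact absurd (top_le_iff.mp h1) (EReal.add_lt_top (EReal.coe_ne_top _) hxp).ne
  have hgx₀ : ((g x₀).toReal : EReal) = g x₀ := EReal.coe_toReal hgx₀top (hgbot x₀)
  set Fstar := f x₀ + (g x₀).toReal with hFstardef
  have hFstar : ∀ (w : EuclideanSpace ℝ (Fin n)) (gw : ℝ), (gw : EReal) = g w → Fstar ≤ f w + gw := by
    intro w gw hgw
    have h1 := hx₀' w (Set.mem_univ w)
    rw [← hgx₀, ← hgw, ← EReal.coe_add, ← EReal.coe_add] at h1
    exact EReal.coe_le_coe_iff.mp h1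
  set G0 := ‖gradient f 0‖ with hG0
  have hgrad : ∀ x, ‖gradient f x‖ ≤ G0 + L * ‖x‖ := by
    intro x
    have h1 := hLip x 0
    rw [sub_zero] at h1
    have h2 := norm_sub_norm_le (gradient f x) (gradient f 0)
    linarith
  constructor
  · intro hF α
    obtain ⟨R, hR⟩ := isBounded_iff_forall_norm_le.mp (hF (α + 1))
    rw [isBounded_iff_forall_norm_le]
    set M := max 1 ((α + 1 - Fstar) / (1 / (2 * γ) - L / 2)) with hM
    refine ⟨(R + M) * (1 + γ * L) + γ * G0, ?_⟩
    intro s hs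
    simp only [Set.mem_setOf_eq] at hs
    have hlt : (⨅ w, (g w + ((f (pf s)
        + (inner ℝ (gradient f (pf s)) (w - pf s) : ℝ)
        + 1 / (2 * γ) * ‖w - pf s‖ ^ 2 : ℝ) : EReal))) < ((α + 1 : ℝ) : EReal) :=
      lt_of_le_of_lt hs (EReal.coe_lt_coe_iff.mpr (by linarith))
    obtain ⟨w, hw⟩ := iInf_lt_iff.mp hlt
    set x := pf s with hxdef
    have hwtop : g w ≠ ⊤ := by
      intro htop
      rw [htop, EReal.top_add_of_ne_bot (EReal.coe_ne_bot _)] at hw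
      exact not_top_lt hw
    have hgw : ((g w).toReal : EReal) = g w := EReal.coe_toReal hwtop (hgbot w)
    set gw := (g w).toReal with hgwdef
    have hreal : gw + (f x + (inner ℝ (gradient f x) (w - x) : ℝ)
        + 1 / (2 * γ) * ‖w - x‖ ^ 2) ≤ α + 1 := by
      rw [← hgw, ← EReal.coe_add] at hw
      exact (EReal.coe_lt_coe_iff.mp hw).le
    have hFs := hFstar w gw hgw
    have hdes := (abs_le.mp (descent f L hL.le hC1 hLip x w)).2
    have h1 : f w + gw + (1 / (2 * γ) - L / 2) * ‖w - x‖ ^ 2 ≤ α + 1 := by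
      linarith [hreal, hdes]
    have hwR : ‖w‖ ≤ R := by
      apply hR
      simp only [Set.mem_setOf_eq]
      rw [← hgw, ← EReal.coe_add]
      apply EReal.coe_le_coe_iff.mpr
      nlinarith [mul_nonneg hc2.le (sq_nonneg ‖w - x‖)]
    have hwx2 : (1 / (2 * γ) - L / 2) * ‖w - x‖ ^ 2 ≤ α + 1 - Fstar := by linarith
    have hwxM : ‖w - x‖ ≤ M := by
      rcases le_or_gt ‖w - x‖ 1 with h | h
      · exact h.trans (le_max_left _ _)
      · have h2 : ‖w - x‖ ^ 2 ≤ (α + 1 - Fstar) / (1 / (2 * γ) - L / 2) := by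
          rw [le_div_iff₀ hc2]
          nlinarith
        have h3 : ‖w - x‖ ≤ ‖w - x‖ ^ 2 := by nlinarith
        exact (h3.trans h2).trans (le_max_right _ _)
    have hxb : ‖x‖ ≤ R + M := by
      have h4 : ‖x‖ ≤ ‖w‖ + ‖w - x‖ := by
        have := norm_sub_le w x
        have h5 := norm_sub_norm_le w x
        linarith [abs_le.mp (abs_norm_sub_norm_le w x)]
      linarith
    have hseq := prox_foc f L γ hL hγ0 hC1 hLip pf hpf s
    have hsb : ‖s‖ ≤ ‖x‖ + γ * ‖gradient f x‖ := by
      rw [← hseq]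
      refine (norm_add_le _ _).trans ?_
      rw [norm_smul]
      simp [abs_of_pos hγ0, ← hxdef]
    have h6 := hgrad x
    have e1 : γ * ‖gradient f x‖ ≤ γ * (G0 + L * ‖x‖) := mul_le_mul_of_nonneg_left h6 hγ0.le
    have e2 : ‖x‖ * (γ * L) ≤ (R + M) * (γ * L) :=
      mul_le_mul_of_nonneg_right hxb (by positivity)
    nlinarith [e1, e2, hxb, hsb]
  · intro hφ α
    obtain ⟨R, hR⟩ := isBounded_iff_forall_norm_le.mp (hφ α)
    rw [isBounded_iff_forall_norm_le]
    refine ⟨(R + γ * G0) / (1 - γ * L), ?_⟩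
    intro x hx
    simp only [Set.mem_setOf_eq] at hx
    have hxtop : g x ≠ ⊤ := by
      intro htop
      rw [htop, EReal.add_top_of_ne_bot (EReal.coe_ne_bot _)] at hx
      exact EReal.coe_ne_top α (top_le_iff.mp hx)
    set s := x + γ • gradient f x with hsdef
    have hfix : pf s = x :=
      prox_fix f L γ hL hγ0 hc2 hC1 hLip pf hpf x
    have hφs : (⨅ w, (g w + ((f (pf s)
        + (inner ℝ (gradient f (pf s)) (w - pf s) : ℝ)
        + 1 / (2 * γ) * ‖w - pf s‖ ^ 2 : ℝ) : EReal))) ≤ (α : EReal) := by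
      refine le_trans (iInf_le _ x) ?_
      rw [hfix]
      simp only [sub_self, inner_zero_right, norm_zero, add_zero]
      norm_num
      rw [add_comm] at hx
      exact hx
    have hsR : ‖s‖ ≤ R := hR s hφs
    have h5 : ‖x‖ ≤ ‖s‖ + γ * ‖gradient f x‖ := by
      have hx2 : x = s - γ • gradient f x := by rw [hsdef]; abel
      calc ‖x‖ = ‖s - γ • gradient f x‖ := by rw [← hx2]
        _ ≤ ‖s‖ + ‖γ • gradient f x‖ := norm_sub_le _ _
        _ = ‖s‖ + γ * ‖gradient f x‖ := by rw [norm_smul]; simp [abs_of_pos hγ0]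
    have h6 := hgrad x
    have e1 : γ * ‖gradient f x‖ ≤ γ * (G0 + L * ‖x‖) := mul_le_mul_of_nonneg_left h6 hγ0.le
    rw [le_div_iff₀ (by linarith : (0:ℝ) < 1 - γ * L)]
    nlinarith [e1, h5, hsR]
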